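/- Fix γ > 0. For each η ∈ (0,1) sufficiently small, let η̂(η) ∈ (0,1) be a solution of the equation η̂^γ · (η̂ − γ log(1−η̂)) = η with η̂(η) → 0 as η → 0⁺. Then lim_{η→0⁺} η̂(η) / (η/(1+γ))^{1/(γ+1)} = 1. -/

import Mathlib

open Filter Topology

/-- Fix `γ > 0`. If for each sufficiently small `η ∈ (0,1)` the value
`e η ∈ (0,1)` solves the focal-loss first-order optimality equation
`(e η)^γ · (e η - γ log(1 - e η)) = η`, and `e η → 0` as `η → 0⁺`, then
`lim_{η→0⁺} e η / (η/(1+γ))^{1/(γ+1)} = 1`. -/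
theorem focal_loss_minimizer_asymptotics (γ : ℝ) (hγ : 0 < γ) (e : ℝ → ℝ)
    (h_sol : ∀ᶠ η in 𝓝[>] (0 : ℝ),
      e η ∈ Set.Ioo (0 : ℝ) 1 ∧ (e η) ^ γ * (e η - γ * Real.log (1 - e η)) = η)
    (h_lim : Tendsto e (𝓝[>] (0 : ℝ)) (𝓝 0)) :
    Tendsto (fun η : ℝ => e η / (η / (1 + γ)) ^ (1 / (γ + 1)))
      (𝓝[>] (0 : ℝ)) (𝓝 1) := by
  have hγ1 : (0:ℝ) < 1 + γ := by linarith
  have hder : HasDerivAt (fun x : ℝ => Real.log (1 - x)) (-1) 0 := by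
    have h1 : HasDerivAt (fun x : ℝ => 1 - x) (-1) 0 := by
      simpa using (hasDerivAt_id (0:ℝ)).const_sub 1
    have h2 : HasDerivAt Real.log (1 : ℝ) ((1:ℝ) - 0) := by
      simpa using Real.hasDerivAt_log (by norm_num : ((1:ℝ) - 0) ≠ 0)
    simpa [Function.comp_def] using h2.comp 0 h1
  have hslope : Tendsto (fun y : ℝ => Real.log (1 - y) / y) (𝓝[≠] (0:ℝ)) (𝓝 (-1)) := by
    have h := hasDerivAt_iff_tendsto_slope.mp hder
    refine h.congr' ?_
    filter_upwards [self_mem_nhdsWithin] with y hy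
    have hy' : y ≠ 0 := hy
    simp [slope_def_field, hy']
  have he0 : Tendsto e (𝓝[>] (0:ℝ)) (𝓝[≠] (0:ℝ)) := by
    rw [tendsto_nhdsWithin_iff]
    refine ⟨h_lim, ?_⟩
    filter_upwards [h_sol] with η h using ne_of_gt h.1.1
  have ht : Tendsto (fun η => Real.log (1 - e η) / e η) (𝓝[>] (0:ℝ)) (𝓝 (-1)) :=
    hslope.comp he0
  have hden : Tendsto (fun η => 1 - γ * (Real.log (1 - e η) / e η)) (𝓝[>] (0:ℝ))
      (𝓝 (1 + γ)) := by
    have h := (ht.const_mul γ).const_sub 1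
    simpa [mul_comm] using h
  have hbase : Tendsto (fun η => (1 + γ) / (1 - γ * (Real.log (1 - e η) / e η)))
      (𝓝[>] (0:ℝ)) (𝓝 1) := by
    have h := (tendsto_const_nhds (x := (1 + γ : ℝ)) (f := 𝓝[>] (0:ℝ))).div hden
      (ne_of_gt hγ1)
    simpa [div_self (ne_of_gt hγ1), Pi.div_def] using h
  have hF : Tendsto (fun η =>
      ((1 + γ) / (1 - γ * (Real.log (1 - e η) / e η))) ^ (1 / (γ + 1)))
      (𝓝[>] (0:ℝ)) (𝓝 1) := by
    have h := hbase.rpow_const (p := 1/(γ+1)) (Or.inl one_ne_zero)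
    simpa using h
  refine Tendsto.congr' ?_ hF
  filter_upwards [h_sol, self_mem_nhdsWithin] with η hs hη
  obtain ⟨⟨hx0, hx1⟩, heq⟩ := hs
  set x := e η with hxdef
  set L := Real.log (1 - x) with hLdef
  have hL : L < 0 := Real.log_neg (by linarith) (by linarith)
  have hD : 0 < x - γ * L := by nlinarith
  have hbpos : 0 < (1 + γ) * x / (x - γ * L) := by positivity
  have hxne : x ≠ 0 := ne_of_gt hx0
  have h0 : 1 - γ * (L / x) = (x - γ * L) / x := by
    field_simp
  have h1 : (1 + γ) / (1 - γ * (L / x)) = (1 + γ) * x / (x - γ * L) := by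
    rw [h0, div_div_eq_mul_div]
  have hxpow : (x ^ (γ + 1) : ℝ) = x ^ γ * x := by
    rw [Real.rpow_add hx0, Real.rpow_one]
  have h2 : η / (1 + γ) = x ^ (γ + 1) / ((1 + γ) * x / (x - γ * L)) := by
    rw [hxpow, ← heq]
    rw [div_div_eq_mul_div, div_eq_div_iff (ne_of_gt hγ1) (by positivity)]
    ring
  have hxx : (x ^ (γ + 1) : ℝ) ^ (1 / (γ + 1)) = x := by
    rw [← Real.rpow_mul hx0.le, mul_one_div, div_self (by linarith : γ + 1 ≠ 0),
      Real.rpow_one]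
  have h3 : (η / (1 + γ)) ^ (1 / (γ + 1))
      = x / ((1 + γ) * x / (x - γ * L)) ^ (1 / (γ + 1)) := by
    rw [h2, Real.div_rpow (by positivity) hbpos.le, hxx]
  have hbpow : 0 < ((1 + γ) * x / (x - γ * L)) ^ (1 / (γ + 1)) :=
    Real.rpow_pos_of_pos hbpos _
  have hbne : ((1 + γ) * x / (x - γ * L)) ^ (1 / (γ + 1)) ≠ 0 := ne_of_gt hbpow
  rw [h1, h3]
  field_simp
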